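/- For every n ≥ 1, f_0(2n+1) ≥ √2 · f_0(n). -/

import Mathlib

open Real Matrix

/-- `simplexInCube n ℓ` : an isometric copy of the regular n-simplex of edge length ℓ
with barycenter at the origin is contained in the cube [-1/2, 1/2]ⁿ. -/
def simplexInCube (n : ℕ) (ℓ : ℝ) : Prop :=
  ∃ p : Fin (n + 1) → EuclideanSpace ℝ (Fin n),
    (∀ i j, i ≠ j → dist (p i) (p j) = ℓ) ∧ (∑ i, p i = 0) ∧
    ∀ i k, |p i k| ≤ 1 / 2

/-- `f0 n` : the largest edge length of a regular n-simplex with barycenter at the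
origin contained in the unit cube. -/
noncomputable def f0 (n : ℕ) : ℝ := sSup {ℓ : ℝ | simplexInCube n ℓ}

open Finset RealInnerProductSpace


lemma sum_split1 (n : ℕ) (f : Fin (2*n+1) → ℝ) :
    ∑ k, f k = (∑ j : Fin n, f ⟨j.1, by omega⟩) + (∑ j : Fin n, f ⟨n + j.1, by omega⟩)
      + f ⟨2*n, by omega⟩ := by
  set g : ℕ → ℝ := fun k => if h : k < 2*n+1 then f ⟨k, h⟩ else 0 with hg
  have h1 : ∑ k, f k = ∑ k ∈ Finset.range (2*n+1), g k := by
    rw [← Fin.sum_univ_eq_sum_range]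
    exact Finset.sum_congr rfl fun k _ => by simp only [hg, dif_pos k.isLt]
  rw [h1, Finset.sum_range_succ, Finset.range_eq_Ico,
    ← Finset.sum_Ico_consecutive _ (Nat.zero_le n) (by omega : n ≤ 2*n),
    Finset.sum_Ico_eq_sum_range, Finset.sum_Ico_eq_sum_range]
  simp only [Nat.sub_zero, Nat.zero_add, show 2*n - n = n by omega]
  rw [← Fin.sum_univ_eq_sum_range (fun k => g k) n,
    ← Fin.sum_univ_eq_sum_range (fun k => g (n + k)) n]
  congr 1
  · congr 1
    · exact Finset.sum_congr rfl fun k _ => by simp only [hg, dif_pos (show (k:ℕ) < 2*n+1 by omega)]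
    · exact Finset.sum_congr rfl fun k _ => by simp only [hg, dif_pos (show n + (k:ℕ) < 2*n+1 by omega)]
  · simp [hg]

lemma sum_split2 (n : ℕ) (f : Fin (2*n+1+1) → ℝ) :
    ∑ k, f k = (∑ j : Fin (n+1), f ⟨j.1, by omega⟩)
      + (∑ j : Fin (n+1), f ⟨(n+1) + j.1, by omega⟩) := by
  set g : ℕ → ℝ := fun k => if h : k < 2*n+1+1 then f ⟨k, h⟩ else 0 with hg
  have h1 : ∑ k, f k = ∑ k ∈ Finset.range (2*n+2), g k := by
    rw [← Fin.sum_univ_eq_sum_range]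
    exact Finset.sum_congr rfl fun k _ => by simp only [hg, dif_pos k.isLt]
  rw [h1, Finset.range_eq_Ico,
    ← Finset.sum_Ico_consecutive _ (Nat.zero_le (n+1)) (by omega : n+1 ≤ 2*n+2),
    Finset.sum_Ico_eq_sum_range, Finset.sum_Ico_eq_sum_range]
  simp only [Nat.sub_zero, Nat.zero_add, show 2*n+2 - (n+1) = n+1 by omega]
  rw [← Fin.sum_univ_eq_sum_range (fun k => g k) (n+1),
    ← Fin.sum_univ_eq_sum_range (fun k => g ((n+1) + k)) (n+1)]
  congr 1
  · exact Finset.sum_congr rfl fun k _ => by simp only [hg, dif_pos (show (k:ℕ) < 2*n+1+1 by omega)]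
  · exact Finset.sum_congr rfl fun k _ => by simp only [hg, dif_pos (show (n+1) + (k:ℕ) < 2*n+1+1 by omega)]


lemma norm_sq_of_simplex {n : ℕ} {ℓ : ℝ} (p : Fin (n+1) → EuclideanSpace ℝ (Fin n))
    (hd : ∀ i j, i ≠ j → dist (p i) (p j) = ℓ) (hs : ∑ i, p i = 0) (i : Fin (n+1)) :
    ‖p i‖^2 = n * ℓ^2 / (2*(n+1)) := by
  set S : ℝ := ∑ j, ‖p j‖^2 with hS
  have key : ∀ i : Fin (n+1), ((n:ℝ)+1)*‖p i‖^2 + S = n * ℓ^2 := by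
    intro i
    have e1 : ∑ j, ‖p i - p j‖^2 = (n:ℝ) * ℓ^2 := by
      rw [← Finset.sum_erase_add _ _ (Finset.mem_univ i)]
      rw [Finset.sum_congr rfl (fun j hj => by
        rw [← dist_eq_norm, hd i j (Ne.symm (Finset.ne_of_mem_erase hj))])]
      simp [Finset.card_erase_of_mem, Finset.card_univ, mul_comm]
    have e2 : ∑ j, ‖p i - p j‖^2 = ((n:ℝ)+1)*‖p i‖^2 - 2*⟪p i, ∑ j, p j⟫ + S := by
      rw [Finset.sum_congr rfl (fun j _ => norm_sub_sq_real (p i) (p j)),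
        Finset.sum_add_distrib, Finset.sum_sub_distrib, Finset.sum_const,
        Finset.card_univ, Fintype.card_fin, ← Finset.mul_sum, inner_sum]
      push_cast
      ring
    rw [e2, hs, inner_zero_right] at e1
    linarith
  have hSval : 2*((n:ℝ)+1)*S = ((n:ℝ)+1) * (n*ℓ^2) := by
    have := Finset.sum_congr rfl (fun j (_ : j ∈ Finset.univ) => key j)
    rw [Finset.sum_add_distrib, ← Finset.mul_sum, Finset.sum_const, Finset.sum_const,
      Finset.card_univ, Fintype.card_fin] at this
    push_cast at this ⊢
    rw [nsmul_eq_mul, nsmul_eq_mul] at this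
    push_cast at this
    linarith
  have hn1 : (0:ℝ) < (n:ℝ)+1 := by positivity
  have hs2 : S = n*ℓ^2/2 := by
    field_simp at hSval ⊢
    nlinarith
  have := key i
  rw [hs2] at this
  field_simp
  linarith [mul_ne_zero (two_ne_zero (α := ℝ)) (ne_of_gt hn1)]

def sgn (n : ℕ) (i : Fin (2*n+1+1)) : ℝ := if (i:ℕ) < n+1 then 1 else -1

def idx (n : ℕ) (i : Fin (2*n+1+1)) : Fin (n+1) :=
  if h : (i:ℕ) < n+1 then ⟨i, h⟩ else ⟨(i:ℕ)-(n+1), by have := i.isLt; omega⟩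

def qdef (n : ℕ) (p : Fin (n+1) → EuclideanSpace ℝ (Fin n)) (t : ℝ)
    (i : Fin (2*n+1+1)) : EuclideanSpace ℝ (Fin (2*n+1)) :=
  WithLp.toLp 2 fun k => if hk : (k:ℕ) < n then p (idx n i) ⟨k, hk⟩
    else if hk2 : (k:ℕ) < 2*n then sgn n i * p (idx n i) ⟨(k:ℕ)-n, by omega⟩
    else sgn n i * t

lemma qdef_apply1 (n : ℕ) (p : Fin (n+1) → EuclideanSpace ℝ (Fin n)) (t : ℝ)
    (i : Fin (2*n+1+1)) (j : Fin n) :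
    qdef n p t i ⟨j.1, by omega⟩ = p (idx n i) j := by
  simp only [qdef, PiLp.toLp_apply]
  rw [dif_pos j.isLt]

lemma qdef_apply2 (n : ℕ) (p : Fin (n+1) → EuclideanSpace ℝ (Fin n)) (t : ℝ)
    (i : Fin (2*n+1+1)) (j : Fin n) :
    qdef n p t i ⟨n + j.1, by omega⟩ = sgn n i * p (idx n i) j := by
  have h1 : ¬ (n + j.1 < n) := by omega
  have h2 : n + j.1 < 2*n := by have := j.isLt; omega
  simp only [qdef, PiLp.toLp_apply]
  have he : (⟨n + j.1 - n, by omega⟩ : Fin n) = j := by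
    apply Fin.ext; simp
  rw [dif_neg h1, dif_pos h2, he]

lemma qdef_apply3 (n : ℕ) (p : Fin (n+1) → EuclideanSpace ℝ (Fin n)) (t : ℝ)
    (i : Fin (2*n+1+1)) (hn : 1 ≤ n) :
    qdef n p t i ⟨2*n, by omega⟩ = sgn n i * t := by
  have h1 : ¬ (2*n < n) := by omega
  have h2 : ¬ (2*n < 2*n) := by omega
  simp only [qdef, PiLp.toLp_apply]
  rw [dif_neg h1, dif_neg h2]

lemma idx_lo (n : ℕ) (j : Fin (n+1)) :
    idx n ⟨j.1, by have := j.isLt; omega⟩ = j := by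
  simp only [idx]
  rw [dif_pos j.isLt]

lemma idx_hi (n : ℕ) (j : Fin (n+1)) :
    idx n ⟨(n+1)+j.1, by have := j.isLt; omega⟩ = j := by
  simp only [idx]
  rw [dif_neg (by omega)]
  apply Fin.ext
  simp

lemma sgn_lo (n : ℕ) (j : Fin (n+1)) :
    sgn n ⟨j.1, by have := j.isLt; omega⟩ = 1 := by
  simp only [sgn]
  rw [if_pos j.isLt]

lemma sgn_hi (n : ℕ) (j : Fin (n+1)) :
    sgn n ⟨(n+1)+j.1, by have := j.isLt; omega⟩ = -1 := by
  simp only [sgn]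
  rw [if_neg (by omega)]

lemma abs_sgn (n : ℕ) (i : Fin (2*n+1+1)) : |sgn n i| = 1 := by
  simp only [sgn]
  split_ifs <;> norm_num

lemma coord_sum_sq {m : ℕ} (x y : EuclideanSpace ℝ (Fin m)) :
    dist x y ^ 2 = ∑ k, (x k - y k)^2 := by
  rw [EuclideanSpace.dist_eq, Real.sq_sqrt (by positivity)]
  exact Finset.sum_congr rfl fun k _ => by rw [Real.dist_eq, sq_abs]

lemma step {n : ℕ} (hn : 1 ≤ n) {ℓ : ℝ} (h : simplexInCube n ℓ) :
    simplexInCube (2*n+1) (Real.sqrt 2 * ℓ) := by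
  obtain ⟨p, hd, hs, hb⟩ := h
  have h01 : (⟨0, by omega⟩ : Fin (n+1)) ≠ ⟨1, by omega⟩ := by
    intro hcon
    have h1 : (0:ℕ) = 1 := congrArg Fin.val hcon
    simp at h1
  have hℓ0 : 0 ≤ ℓ := by
    rw [← hd _ _ h01]; exact dist_nonneg
  have hnorm : ∀ i, ‖p i‖^2 = n * ℓ^2 / (2*((n:ℝ)+1)) := by
    intro i
    have := norm_sq_of_simplex p hd hs i
    push_cast at this ⊢
    linarith
  have hnormsum : ∀ i, ∑ k, (p i k)^2 = n*ℓ^2/(2*((n:ℝ)+1)) := by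
    intro i
    rw [← hnorm i, EuclideanSpace.norm_eq, Real.sq_sqrt (by positivity)]
    exact Finset.sum_congr rfl fun k _ => by rw [Real.norm_eq_abs, sq_abs]
  have hcoord : ∀ c : Fin n, ∑ j, p j c = 0 := by
    intro c
    have h1 := map_sum (EuclideanSpace.proj c : EuclideanSpace ℝ (Fin n) →L[ℝ] ℝ)
      p Finset.univ
    rw [hs] at h1
    simpa using h1.symm
  have hnR : (1:ℝ) ≤ (n:ℝ) := by exact_mod_cast hn
  have hℓsq : ℓ^2 ≤ ((n:ℝ)+1)/2 := by
    have h1 : ∑ k, (p 0 k)^2 ≤ (n:ℝ) * (1/4) := by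
      calc ∑ k, (p 0 k)^2 ≤ ∑ _k : Fin n, (1/4 : ℝ) := by
            refine Finset.sum_le_sum fun k _ => ?_
            have h2 := hb 0 k
            nlinarith [abs_nonneg (p 0 k), sq_abs (p 0 k), abs_le.1 h2]
        _ = (n:ℝ) * (1/4) := by simp [mul_comm]
    rw [hnormsum 0] at h1
    rw [div_le_iff₀ (by positivity : (0:ℝ) < 2*((n:ℝ)+1))] at h1
    nlinarith
  set t : ℝ := ℓ / Real.sqrt (2*((n:ℝ)+1)) with htdef
  have hsq2 : (0:ℝ) < Real.sqrt (2*((n:ℝ)+1)) := Real.sqrt_pos.2 (by positivity)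
  have ht0 : 0 ≤ t := div_nonneg hℓ0 hsq2.le
  have ht2 : t^2 = ℓ^2 / (2*((n:ℝ)+1)) := by
    rw [htdef, div_pow, Real.sq_sqrt (by positivity)]
  have ht14 : t^2 ≤ 1/4 := by
    rw [ht2, div_le_iff₀ (by positivity : (0:ℝ) < 2*((n:ℝ)+1))]
    nlinarith
  have htle : t ≤ 1/2 := by nlinarith
  have distsq : ∀ a b : Fin (n+1), a ≠ b → ∑ j : Fin n, (p a j - p b j)^2 = ℓ^2 := by
    intro a b hab
    rw [← coord_sum_sq, hd a b hab]
  refine ⟨qdef n p t, ?_, ?_, ?_⟩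
  · -- distances
    intro i i' hne
    have key : ∑ k : Fin (2*n+1), (qdef n p t i k - qdef n p t i' k)^2 = 2*ℓ^2 := by
      rw [sum_split1 n (fun k => (qdef n p t i k - qdef n p t i' k)^2)]
      simp only [qdef_apply1, qdef_apply2, qdef_apply3 n p t _ hn]
      set a := idx n i with ha
      set b := idx n i' with hb'
      by_cases hi : (i:ℕ) < n+1 <;> by_cases hi' : (i':ℕ) < n+1
      · -- both low
        have hsi : sgn n i = 1 := if_pos hi
        have hsi' : sgn n i' = 1 := if_pos hi'
        have hab : a ≠ b := by
          rw [ha, hb']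
          simp only [idx]
          rw [dif_pos hi, dif_pos hi']
          intro hcon
          have h1 : (i:ℕ) = (i':ℕ) := by simpa [Fin.mk.injEq] using hcon
          exact hne (Fin.ext h1)
        rw [hsi, hsi']
        simp only [one_mul]
        rw [distsq a b hab]
        ring
      · have hsi : sgn n i = 1 := if_pos hi
        have hsi' : sgn n i' = -1 := if_neg hi'
        rw [hsi, hsi']
        have hmid : ∑ j : Fin n, (1 * p a j - -1 * p b j)^2
            = ∑ j : Fin n, ((p a j)^2 + 2*(p a j)*(p b j) + (p b j)^2) :=
          Finset.sum_congr rfl fun j _ => by ring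
        have hfst : ∑ j : Fin n, (p a j - p b j)^2
            = ∑ j : Fin n, ((p a j)^2 - 2*(p a j)*(p b j) + (p b j)^2) :=
          Finset.sum_congr rfl fun j _ => by ring
        rw [hmid, hfst, ← Finset.sum_add_distrib]
        have : ∑ j : Fin n, ((p a j)^2 - 2*(p a j)*(p b j) + (p b j)^2
            + ((p a j)^2 + 2*(p a j)*(p b j) + (p b j)^2))
            = ∑ j : Fin n, (2*(p a j)^2 + 2*(p b j)^2) :=
          Finset.sum_congr rfl fun j _ => by ring
        rw [this, Finset.sum_add_distrib, ← Finset.mul_sum, ← Finset.mul_sum,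
          hnormsum a, hnormsum b]
        rw [show (1*t - -1*t)^2 = 4*t^2 by ring, ht2]
        field_simp
        ring
      · have hsi : sgn n i = -1 := if_neg hi
        have hsi' : sgn n i' = 1 := if_pos hi'
        rw [hsi, hsi']
        have hmid : ∑ j : Fin n, (-1 * p a j - 1 * p b j)^2
            = ∑ j : Fin n, ((p a j)^2 + 2*(p a j)*(p b j) + (p b j)^2) :=
          Finset.sum_congr rfl fun j _ => by ring
        have hfst : ∑ j : Fin n, (p a j - p b j)^2
            = ∑ j : Fin n, ((p a j)^2 - 2*(p a j)*(p b j) + (p b j)^2) :=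
          Finset.sum_congr rfl fun j _ => by ring
        rw [hmid, hfst, ← Finset.sum_add_distrib]
        have : ∑ j : Fin n, ((p a j)^2 - 2*(p a j)*(p b j) + (p b j)^2
            + ((p a j)^2 + 2*(p a j)*(p b j) + (p b j)^2))
            = ∑ j : Fin n, (2*(p a j)^2 + 2*(p b j)^2) :=
          Finset.sum_congr rfl fun j _ => by ring
        rw [this, Finset.sum_add_distrib, ← Finset.mul_sum, ← Finset.mul_sum,
          hnormsum a, hnormsum b]
        rw [show (-1*t - 1*t)^2 = 4*t^2 by ring, ht2]
        field_simp
        ring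
      · -- both high
        have hsi : sgn n i = -1 := if_neg hi
        have hsi' : sgn n i' = -1 := if_neg hi'
        have hab : a ≠ b := by
          rw [ha, hb']
          simp only [idx]
          rw [dif_neg hi, dif_neg hi']
          intro hcon
          have h1 : (i:ℕ) - (n+1) = (i':ℕ) - (n+1) := by
            simpa [Fin.mk.injEq] using hcon
          have h2 := i.isLt
          have h3 := i'.isLt
          exact hne (Fin.ext (by omega))
        have hmid : ∑ j : Fin n, (-1 * p a j - -1 * p b j)^2
            = ∑ j : Fin n, (p a j - p b j)^2 :=
          Finset.sum_congr rfl fun j _ => by ring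
        rw [hsi, hsi', hmid, distsq a b hab]
        ring
    rw [EuclideanSpace.dist_eq]
    have : ∑ k, dist (qdef n p t i k) (qdef n p t i' k) ^ 2
        = ∑ k, (qdef n p t i k - qdef n p t i' k)^2 :=
      Finset.sum_congr rfl fun k _ => by rw [Real.dist_eq, sq_abs]
    rw [this, key, show (2:ℝ)*ℓ^2 = 2 * ℓ^2 from rfl, Real.sqrt_mul (by norm_num) (ℓ^2),
      Real.sqrt_sq hℓ0]
  · -- barycenter
    ext k
    have hps : (∑ i, qdef n p t i) k = ∑ i, qdef n p t i k := by
      have h1 := map_sum (EuclideanSpace.proj k :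
        EuclideanSpace ℝ (Fin (2*n+1)) →L[ℝ] ℝ) (qdef n p t) Finset.univ
      exact h1
    have hz : (0 : EuclideanSpace ℝ (Fin (2*n+1))) k = 0 := rfl
    rw [hps, hz]
    rcases show (k:ℕ) < n ∨ (¬(k:ℕ) < n ∧ (k:ℕ) < 2*n) ∨ (k:ℕ) = 2*n by
        have := k.isLt; omega with hk | ⟨hk1, hk2⟩ | hk
    · have hq : ∀ i, qdef n p t i k = p (idx n i) ⟨k.1, hk⟩ := fun i => by
        simp only [qdef, PiLp.toLp_apply]; rw [dif_pos hk]
      rw [show (∑ i : Fin (2*n+1+1), qdef n p t i k)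
          = ∑ i : Fin (2*n+1+1), p (idx n i) ⟨k.1, hk⟩ from
        Finset.sum_congr rfl fun i _ => hq i]
      rw [sum_split2 n (fun i => p (idx n i) ⟨k.1, hk⟩)]
      simp only [idx_lo, idx_hi]
      rw [hcoord ⟨k.1, hk⟩]
      ring
    · have hq : ∀ i, qdef n p t i k = sgn n i * p (idx n i) ⟨k.1 - n, by omega⟩ :=
        fun i => by simp only [qdef, PiLp.toLp_apply]; rw [dif_neg hk1, dif_pos hk2]
      rw [show (∑ i : Fin (2*n+1+1), qdef n p t i k)
          = ∑ i : Fin (2*n+1+1), sgn n i * p (idx n i) ⟨k.1 - n, by omega⟩ from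
        Finset.sum_congr rfl fun i _ => hq i]
      rw [sum_split2 n (fun i => sgn n i * p (idx n i) ⟨k.1 - n, by omega⟩)]
      simp only [idx_lo, idx_hi, sgn_lo, sgn_hi, one_mul, neg_one_mul]
      rw [Finset.sum_neg_distrib, hcoord ⟨k.1 - n, by omega⟩]
      ring
    · have hq : ∀ i, qdef n p t i k = sgn n i * t := fun i => by
        simp only [qdef, PiLp.toLp_apply]; rw [dif_neg (by omega), dif_neg (by omega)]
      rw [show (∑ i : Fin (2*n+1+1), qdef n p t i k)
          = ∑ i : Fin (2*n+1+1), sgn n i * t from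
        Finset.sum_congr rfl fun i _ => hq i]
      rw [sum_split2 n (fun i => sgn n i * t)]
      simp only [sgn_lo, sgn_hi, one_mul, neg_one_mul]
      rw [Finset.sum_neg_distrib]
      ring
  · -- coordinates
    intro i k
    simp only [qdef, PiLp.toLp_apply]
    split_ifs with h1 h2
    · exact hb _ _
    · rw [abs_mul, abs_sgn, one_mul]; exact hb _ _
    · rw [abs_mul, abs_sgn, one_mul, abs_of_nonneg ht0]; exact htle

lemma simplex_zero (m : ℕ) : simplexInCube m 0 := by
  refine ⟨fun _ => 0, fun i j _ => by simp, by simp, fun i k => ?_⟩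
  have hz : (fun (_ : Fin (m+1)) => (0 : EuclideanSpace ℝ (Fin m))) i k = 0 := rfl
  rw [hz]
  norm_num

lemma simplex_le (m : ℕ) (hm : 1 ≤ m) {ℓ : ℝ} (h : simplexInCube m ℓ) : ℓ ≤ m := by
  obtain ⟨p, hd, hs, hb⟩ := h
  have h01 : (⟨0, by omega⟩ : Fin (m+1)) ≠ ⟨1, by omega⟩ := by
    intro hcon
    have h1 := congrArg Fin.val hcon
    simp at h1
  have hℓ0 : 0 ≤ ℓ := by rw [← hd _ _ h01]; exact dist_nonneg
  have hmR : (1:ℝ) ≤ (m:ℝ) := by exact_mod_cast hm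
  have hsq : ℓ^2 ≤ (m:ℝ) := by
    have hc := coord_sum_sq (p ⟨0, by omega⟩) (p ⟨1, by omega⟩)
    rw [hd _ _ h01] at hc
    calc ℓ^2 = ∑ k, (p ⟨0, by omega⟩ k - p ⟨1, by omega⟩ k)^2 := hc
      _ ≤ ∑ _k : Fin m, (1:ℝ) := Finset.sum_le_sum fun k _ => by
          nlinarith [abs_le.1 (hb ⟨0, by omega⟩ k), abs_le.1 (hb ⟨1, by omega⟩ k)]
      _ = (m:ℝ) := by simp
  nlinarith

/-- f₀(2n+1) ≥ √2 · f₀(n). -/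
theorem stmt12 (n : ℕ) (hn : 1 ≤ n) : f0 (2 * n + 1) ≥ Real.sqrt 2 * f0 n := by
  have hbdd : BddAbove {ℓ : ℝ | simplexInCube (2*n+1) ℓ} :=
    ⟨((2*n+1 : ℕ) : ℝ), fun x hx => simplex_le (2*n+1) (by omega) hx⟩
  have hne : {ℓ : ℝ | simplexInCube n ℓ}.Nonempty := ⟨0, simplex_zero n⟩
  have h2 : (0:ℝ) < Real.sqrt 2 := Real.sqrt_pos.2 (by norm_num)
  have hf : f0 (2*n+1) = sSup {ℓ : ℝ | simplexInCube (2*n+1) ℓ} := rfl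
  have hmain : f0 n ≤ f0 (2*n+1) / Real.sqrt 2 := by
    apply csSup_le hne
    intro ℓ hℓ
    have hmem : Real.sqrt 2 * ℓ ∈ {ℓ : ℝ | simplexInCube (2*n+1) ℓ} := step hn hℓ
    have hle := le_csSup hbdd hmem
    rw [← hf] at hle
    rw [le_div_iff₀ h2]
    linarith
  calc Real.sqrt 2 * f0 n ≤ Real.sqrt 2 * (f0 (2*n+1) / Real.sqrt 2) :=
        mul_le_mul_of_nonneg_left hmain h2.le
    _ = f0 (2*n+1) := by field_simp
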